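/- Let G = (V,E) be a finite connected undirected graph with positive edge weights, let Q be a shortest path in G, let u ∈ V with u not on Q, and let ε > 0 be a real number. Then there exists a subset P of V(Q) with |P| ≤ 4/ε + 4 such that for every vertex v on Q there is a p ∈ P with d_G(u,p) + d_Q(p,v) ≤ (1+ε)·d_G(u,v). -/

import Mathlib

open SimpleGraph
open scoped Classical

/-- The weight of a walk in an edge-weighted graph: the sum of the weights of its edges. -/
noncomputable def walkWeight {V : Type*} (w : V → V → ℝ) {G : SimpleGraph V} {x y : V}
    (p : G.Walk x y) : ℝ :=
  (p.darts.map (fun d => w d.toProd.1 d.toProd.2)).sum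

/-- The (shortest-path) distance between two vertices of an edge-weighted graph:
the infimum of the weights of walks between them. -/
noncomputable def gdist {V : Type*} (G : SimpleGraph V) (w : V → V → ℝ) (x y : V) : ℝ :=
  sInf {c : ℝ | ∃ p : G.Walk x y, walkWeight w p = c}

/-- The distance along a path `Q` between two of its vertices `x` and `y`,
i.e. the weight of the subpath of `Q` between `x` and `y`, computed as the
difference of the weights of the prefixes of `Q` ending at `x` and at `y`
(junk value `0` if `x` or `y` is not on `Q`). -/
noncomputable def pathDist {V : Type*} (w : V → V → ℝ) {G : SimpleGraph V} {a b : V}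
    (Q : G.Walk a b) (x y : V) : ℝ :=
  if hx : x ∈ Q.support then
    if hy : y ∈ Q.support then
      |walkWeight w (Q.takeUntil x hx) - walkWeight w (Q.takeUntil y hy)|
    else 0
  else 0

/-- `Q` is a shortest path: it is a path and for all vertices `x, y` on `Q`, the weight of
the subpath of `Q` between `x` and `y` equals the distance between `x` and `y` in `G`. -/
def IsShortestPath {V : Type*} (G : SimpleGraph V) (w : V → V → ℝ) {a b : V}
    (Q : G.Walk a b) : Prop :=
  Q.IsPath ∧ ∀ x ∈ Q.support, ∀ y ∈ Q.support, pathDist w Q x y = gdist G w x y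

section Aux

variable {V : Type*} {G : SimpleGraph V} (w : V → V → ℝ)

lemma walkWeight_eq_sum_edges (hsymm : ∀ x y, w x y = w y x) {x y : V} (p : G.Walk x y) :
    walkWeight w p = (p.edges.map (Sym2.lift ⟨w, hsymm⟩)).sum := by
  unfold walkWeight
  show _ = ((p.darts.map SimpleGraph.Dart.edge).map (Sym2.lift ⟨w, hsymm⟩)).sum
  rw [List.map_map]
  rfl

lemma walkWeight_nonneg (hpos : ∀ x y, G.Adj x y → 0 < w x y) {x y : V} (p : G.Walk x y) :
    0 ≤ walkWeight w p := by
  apply List.sum_nonneg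
  intro r hr
  obtain ⟨d, _, rfl⟩ := List.mem_map.1 hr
  exact (hpos _ _ d.adj).le

lemma walkWeight_append (hpos : ∀ x y, G.Adj x y → 0 < w x y) {x y z : V}
    (p : G.Walk x y) (q : G.Walk y z) :
    walkWeight w (p.append q) = walkWeight w p + walkWeight w q := by
  unfold walkWeight
  rw [SimpleGraph.Walk.darts_append, List.map_append, List.sum_append]

lemma list_toFinset_sum_le {α : Type*} [DecidableEq α] (l : List α) (g : α → ℝ)
    (h : ∀ a ∈ l, 0 ≤ g a) : ∑ a ∈ l.toFinset, g a ≤ (l.map g).sum := by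
  induction l with
  | nil => simp
  | cons a l ih =>
    have ih' := ih (fun b hb => h b (List.mem_cons_of_mem _ hb))
    simp only [List.toFinset_cons, List.map_cons, List.sum_cons]
    by_cases ha : a ∈ l.toFinset
    · rw [Finset.insert_eq_self.2 ha]
      linarith [h a List.mem_cons_self]
    · rw [Finset.sum_insert ha]
      linarith

lemma walkWeight_bypass_le (hsymm : ∀ x y, w x y = w y x)
    (hpos : ∀ x y, G.Adj x y → 0 < w x y) {x y : V} (p : G.Walk x y) :
    walkWeight w p.bypass ≤ walkWeight w p := by
  rw [walkWeight_eq_sum_edges w hsymm, walkWeight_eq_sum_edges w hsymm]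
  have hnn : ∀ e ∈ p.edges, 0 ≤ Sym2.lift ⟨w, hsymm⟩ e := by
    intro e he
    have hes := p.edges_subset_edgeSet he
    induction e with
    | _ a b => exact (hpos a b (G.mem_edgeSet.1 hes)).le
  calc (p.bypass.edges.map (Sym2.lift ⟨w, hsymm⟩)).sum
      = ∑ e ∈ p.bypass.edges.toFinset, Sym2.lift ⟨w, hsymm⟩ e :=
        (List.sum_toFinset _ p.bypass_isPath.isTrail.edges_nodup).symm
    _ ≤ ∑ e ∈ p.edges.toFinset, Sym2.lift ⟨w, hsymm⟩ e := by
        apply Finset.sum_le_sum_of_subset_of_nonneg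
        · intro e he
          exact List.mem_toFinset.2 (p.edges_bypass_subset (List.mem_toFinset.1 he))
        · intro e he _
          exact hnn e (List.mem_toFinset.1 he)
    _ ≤ (p.edges.map (Sym2.lift ⟨w, hsymm⟩)).sum :=
        list_toFinset_sum_le _ _ hnn

variable [Fintype V]

lemma gdist_bddBelow (hpos : ∀ x y, G.Adj x y → 0 < w x y) (x y : V) :
    BddBelow {c : ℝ | ∃ p : G.Walk x y, walkWeight w p = c} :=
  ⟨0, fun c ⟨q, hq⟩ => hq ▸ walkWeight_nonneg w hpos q⟩

lemma gdist_le_walkWeight (hpos : ∀ x y, G.Adj x y → 0 < w x y) {x y : V} (p : G.Walk x y) :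
    gdist G w x y ≤ walkWeight w p :=
  csInf_le (gdist_bddBelow w hpos x y) ⟨p, rfl⟩

lemma exists_gdist_walk (hsymm : ∀ x y, w x y = w y x)
    (hpos : ∀ x y, G.Adj x y → 0 < w x y) (hconn : G.Connected) (x y : V) :
    ∃ p : G.Walk x y, p.IsPath ∧ walkWeight w p = gdist G w x y := by
  classical
  obtain ⟨p0⟩ := hconn.preconnected x y
  let T : Finset ℝ := Finset.univ.image (fun q : G.Path x y => walkWeight w q.val)
  have hTne : T.Nonempty := ⟨walkWeight w (⟨p0.bypass, p0.bypass_isPath⟩ : G.Path x y).val,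
    Finset.mem_image.2 ⟨_, Finset.mem_univ _, rfl⟩⟩
  obtain ⟨q, _, hq⟩ := Finset.mem_image.1 (T.min'_mem hTne)
  refine ⟨q.val, q.prop, ?_⟩
  have h1 : gdist G w x y ≤ walkWeight w q.val := gdist_le_walkWeight w hpos q.val
  have h2 : walkWeight w q.val ≤ gdist G w x y := by
    rw [hq]
    refine le_csInf ⟨walkWeight w p0, p0, rfl⟩ ?_
    rintro c ⟨r, rfl⟩
    calc T.min' hTne ≤ walkWeight w r.bypass :=
          T.min'_le _ (Finset.mem_image.2 ⟨⟨r.bypass, r.bypass_isPath⟩, Finset.mem_univ _, rfl⟩)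
      _ ≤ walkWeight w r := walkWeight_bypass_le w hsymm hpos r
  linarith

lemma gdist_nonneg (hsymm : ∀ x y, w x y = w y x)
    (hpos : ∀ x y, G.Adj x y → 0 < w x y) (hconn : G.Connected) (x y : V) :
    0 ≤ gdist G w x y := by
  obtain ⟨p, _, hp⟩ := exists_gdist_walk w hsymm hpos hconn x y
  exact hp ▸ walkWeight_nonneg w hpos p

lemma gdist_symm (hsymm : ∀ x y, w x y = w y x)
    (hpos : ∀ x y, G.Adj x y → 0 < w x y) (hconn : G.Connected) (x y : V) :
    gdist G w x y = gdist G w y x := by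
  have key : ∀ a b : V, gdist G w a b ≤ gdist G w b a := by
    intro a b
    obtain ⟨p, _, hp⟩ := exists_gdist_walk w hsymm hpos hconn b a
    calc gdist G w a b ≤ walkWeight w p.reverse := gdist_le_walkWeight w hpos p.reverse
      _ = walkWeight w p := by
          rw [walkWeight_eq_sum_edges w hsymm, walkWeight_eq_sum_edges w hsymm,
            SimpleGraph.Walk.edges_reverse, List.map_reverse, List.sum_reverse]
      _ = gdist G w b a := hp
  exact le_antisymm (key x y) (key y x)

lemma gdist_triangle (hsymm : ∀ x y, w x y = w y x)
    (hpos : ∀ x y, G.Adj x y → 0 < w x y) (hconn : G.Connected) (x y z : V) :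
    gdist G w x z ≤ gdist G w x y + gdist G w y z := by
  obtain ⟨p, _, hp⟩ := exists_gdist_walk w hsymm hpos hconn x y
  obtain ⟨q, _, hq⟩ := exists_gdist_walk w hsymm hpos hconn y z
  calc gdist G w x z ≤ walkWeight w (p.append q) := gdist_le_walkWeight w hpos _
    _ = walkWeight w p + walkWeight w q := walkWeight_append w hpos p q
    _ = gdist G w x y + gdist G w y z := by rw [hp, hq]

lemma gdist_pos (hsymm : ∀ x y, w x y = w y x)
    (hpos : ∀ x y, G.Adj x y → 0 < w x y) (hconn : G.Connected) {x y : V} (hxy : x ≠ y) :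
    0 < gdist G w x y := by
  obtain ⟨p, _, hp⟩ := exists_gdist_walk w hsymm hpos hconn x y
  rw [← hp]
  cases p with
  | nil => exact absurd rfl hxy
  | cons h p' =>
    have h1 : 0 ≤ walkWeight w p' := walkWeight_nonneg w hpos p'
    unfold walkWeight
    rw [SimpleGraph.Walk.darts_cons, List.map_cons, List.sum_cons]
    have h2 := hpos _ _ h
    exact add_pos_of_pos_of_nonneg h2 h1

end Aux

/-- One-sided greedy portal construction: a potential-function induction. -/
lemma portal_side {V : Type*} (S0 : Finset V) (t f : V → ℝ) (ε D : ℝ)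
    (hε : 0 < ε) (hD : 0 < D) (vs : V)
    (hfD : ∀ v ∈ S0, D ≤ f v)
    (hlip : ∀ x ∈ S0, ∀ y ∈ S0, |f x - f y| ≤ |t x - t y|)
    (htri : ∀ x ∈ S0, ∀ y ∈ S0, |t x - t y| ≤ f x + f y)
    (hvs : vs ∈ S0) (hfvs : f vs = D) :
    ∀ n : ℕ, ∀ p ∈ S0, (S0.filter (fun v => t p < t v)).card ≤ n →
      ∃ P : Finset V, P ⊆ S0 ∧
        ε * D * P.card + (D + (t p - t vs) - f p) ≤ 2 * D ∧
        ∀ v ∈ S0, t p < t v → ∃ q ∈ insert p P, f q + |t v - t q| ≤ (1 + ε) * f v := by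
  classical
  have hPhi : ∀ p ∈ S0, D + (t p - t vs) - f p ≤ 2 * D := by
    intro p hp
    have h1 := htri p hp vs hvs
    have h2 : t p - t vs ≤ |t p - t vs| := le_abs_self _
    linarith
  intro n
  induction n with
  | zero =>
    intro p hp hcard
    refine ⟨∅, Finset.empty_subset _, by simpa using hPhi p hp, ?_⟩
    intro v hv htv
    exfalso
    have : v ∈ S0.filter (fun v => t p < t v) := Finset.mem_filter.2 ⟨hv, htv⟩
    have := Finset.card_pos.2 ⟨v, this⟩
    omega
  | succ n ih =>
    intro p hp hcard
    set U := S0.filter (fun v => t p < t v ∧ ¬(f p + |t v - t p| ≤ (1 + ε) * f v)) with hU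
    by_cases hUne : U.Nonempty
    · obtain ⟨q, hqU, hqmin⟩ := U.exists_min_image t hUne
      obtain ⟨hqS, htpq, hqunc⟩ := Finset.mem_filter.1 hqU
      -- card of next filter
      have hsub : S0.filter (fun v => t q < t v) ⊆ (S0.filter (fun v => t p < t v)).erase q := by
        intro v hv
        obtain ⟨hvS, htqv⟩ := Finset.mem_filter.1 hv
        refine Finset.mem_erase.2 ⟨?_, Finset.mem_filter.2 ⟨hvS, lt_trans htpq htqv⟩⟩
        rintro rfl; exact lt_irrefl _ htqv
      have hqmemf : q ∈ S0.filter (fun v => t p < t v) := Finset.mem_filter.2 ⟨hqS, htpq⟩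
      have hcard' : (S0.filter (fun v => t q < t v)).card ≤ n := by
        have h1 := Finset.card_le_card hsub
        have h2 := Finset.card_erase_of_mem hqmemf
        have h3 := Finset.card_pos.2 ⟨q, hqmemf⟩
        omega
      obtain ⟨P', hP'sub, hP'card, hP'cov⟩ := ih q hqS hcard'
      refine ⟨insert q P', Finset.insert_subset hqS hP'sub, ?_, ?_⟩
      · -- potential step
        have habs : |t q - t p| = t q - t p := abs_of_pos (sub_pos.2 htpq)
        rw [habs] at hqunc
        push_neg at hqunc
        have hfq : D ≤ f q := hfD q hqS
        have hstep : ε * D < (t q - t p) - f q + f p := by nlinarith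
        have hcle : ((insert q P').card : ℝ) ≤ (P'.card : ℝ) + 1 := by
          exact_mod_cast Finset.card_insert_le q P'
        have hmul : ε * D * ((insert q P').card : ℝ) ≤ ε * D * ((P'.card : ℝ) + 1) :=
          mul_le_mul_of_nonneg_left hcle (by positivity)
        nlinarith [hP'card]
      · -- coverage
        intro v hv htv
        by_cases hvU : v ∈ U
        · have htqv : t q ≤ t v := hqmin v hvU
          rcases lt_or_eq_of_le htqv with h | h
          · obtain ⟨q', hq', hcov⟩ := hP'cov v hv h
            exact ⟨q', Finset.mem_insert_of_mem hq', hcov⟩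
          · refine ⟨q, Finset.mem_insert_of_mem (Finset.mem_insert_self q P'), ?_⟩
            have h0 : |t v - t q| = 0 := by rw [← h]; simp
            have h1 : |f q - f v| ≤ |t q - t v| := hlip q hqS v hv
            have h2 : |t q - t v| = 0 := by rw [h]; simp
            have h3 : f q = f v := by
              have := abs_nonneg (f q - f v)
              have h4 : |f q - f v| ≤ 0 := h2 ▸ h1
              have : |f q - f v| = 0 := le_antisymm h4 (abs_nonneg _)
              have := abs_eq_zero.1 this
              linarith
            have hfv : D ≤ f v := hfD v hv
            have : 0 ≤ ε * f v := mul_nonneg hε.le (le_trans hD.le hfv)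
            rw [h0, h3]
            linarith
        · refine ⟨p, Finset.mem_insert_self _ _, ?_⟩
          by_contra hcon
          exact hvU (Finset.mem_filter.2 ⟨hv, htv, hcon⟩)
    · -- no uncovered vertex: p covers everything
      refine ⟨∅, Finset.empty_subset _, by simpa using hPhi p hp, ?_⟩
      intro v hv htv
      refine ⟨p, Finset.mem_insert_self _ _, ?_⟩
      by_contra hcon
      exact hUne ⟨v, Finset.mem_filter.2 ⟨hv, htv, hcon⟩⟩

/-- Thorup's portal-set result: for a shortest path `Q` in a finite connected positively
edge-weighted graph `G`, a vertex `u` off `Q`, and `ε > 0`, there is a set `P` of at most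
`4/ε + 4` portals on `Q` such that every vertex `v` of `Q` is `(1+ε)`-approximately reached
from `u` through some portal `p ∈ P` followed by the subpath of `Q` from `p` to `v`. -/
theorem thorup_portal_set {V : Type*} [Fintype V] (G : SimpleGraph V) (w : V → V → ℝ)
    (hsymm : ∀ x y, w x y = w y x) (hpos : ∀ x y, G.Adj x y → 0 < w x y)
    (hconn : G.Connected) {a b : V} (Q : G.Walk a b) (hQ : IsShortestPath G w Q)
    (u : V) (hu : u ∉ Q.support) (ε : ℝ) (hε : 0 < ε) :
    ∃ P : Finset V, (∀ p ∈ P, p ∈ Q.support) ∧ (P.card : ℝ) ≤ 4 / ε + 4 ∧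
      ∀ v ∈ Q.support, ∃ p ∈ P,
        gdist G w u p + pathDist w Q p v ≤ (1 + ε) * gdist G w u v := by
  classical
  set S0 : Finset V := Q.support.toFinset with hS0
  have hmemS0 : ∀ v, v ∈ S0 ↔ v ∈ Q.support := fun v => List.mem_toFinset
  set f : V → ℝ := fun v => gdist G w u v with hf
  set t : V → ℝ := fun v => if h : v ∈ Q.support then walkWeight w (Q.takeUntil v h) else 0
    with ht
  have hpd : ∀ x ∈ Q.support, ∀ y ∈ Q.support, pathDist w Q x y = |t x - t y| := by
    intro x hx y hy
    rw [pathDist, dif_pos hx, dif_pos hy, ht]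
    simp only [dif_pos hx, dif_pos hy]
  have hgd : ∀ x ∈ Q.support, ∀ y ∈ Q.support, gdist G w x y = |t x - t y| := by
    intro x hx y hy
    rw [← hQ.2 x hx y hy, hpd x hx y hy]
  -- choose vstar
  have hS0ne : S0.Nonempty := ⟨a, (hmemS0 a).2 Q.start_mem_support⟩
  obtain ⟨vs, hvsS, hvsmin⟩ := S0.exists_min_image f hS0ne
  set D : ℝ := f vs with hDdef
  have hD : 0 < D := by
    apply gdist_pos w hsymm hpos hconn
    intro h; exact hu (h ▸ (hmemS0 vs).1 hvsS)
  have hfD : ∀ v ∈ S0, D ≤ f v := hvsmin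
  have hlip : ∀ x ∈ S0, ∀ y ∈ S0, |f x - f y| ≤ |t x - t y| := by
    intro x hx y hy
    rw [← hgd x ((hmemS0 x).1 hx) y ((hmemS0 y).1 hy)]
    rw [abs_sub_le_iff]
    constructor
    · have h1 := gdist_triangle w hsymm hpos hconn u y x
      have h2 := gdist_symm w hsymm hpos hconn y x
      simp only [hf]; linarith
    · have h1 := gdist_triangle w hsymm hpos hconn u x y
      simp only [hf]; linarith
  have htri : ∀ x ∈ S0, ∀ y ∈ S0, |t x - t y| ≤ f x + f y := by
    intro x hx y hy
    rw [← hgd x ((hmemS0 x).1 hx) y ((hmemS0 y).1 hy)]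
    have h1 := gdist_triangle w hsymm hpos hconn x u y
    have h2 := gdist_symm w hsymm hpos hconn x u
    simp only [hf]; linarith
  -- two sides
  obtain ⟨P1, hP1sub, hP1card, hP1cov⟩ :=
    portal_side S0 t f ε D hε hD vs hfD hlip htri hvsS rfl S0.card vs hvsS
      (Finset.card_filter_le _ _)
  have hlip' : ∀ x ∈ S0, ∀ y ∈ S0, |f x - f y| ≤ |(-t x) - (-t y)| := by
    intro x hx y hy
    rw [show (-t x) - (-t y) = -(t x - t y) by ring, abs_neg]
    exact hlip x hx y hy
  have htri' : ∀ x ∈ S0, ∀ y ∈ S0, |(-t x) - (-t y)| ≤ f x + f y := by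
    intro x hx y hy
    rw [show (-t x) - (-t y) = -(t x - t y) by ring, abs_neg]
    exact htri x hx y hy
  obtain ⟨P2, hP2sub, hP2card, hP2cov⟩ :=
    portal_side S0 (fun v => -t v) f ε D hε hD vs hfD hlip' htri' hvsS rfl S0.card vs hvsS
      (Finset.card_filter_le _ _)
  refine ⟨insert vs (P1 ∪ P2), ?_, ?_, ?_⟩
  · intro p hp
    rcases Finset.mem_insert.1 hp with rfl | hp
    · exact (hmemS0 _).1 hvsS
    · rcases Finset.mem_union.1 hp with h | h
      · exact (hmemS0 _).1 (hP1sub h)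
      · exact (hmemS0 _).1 (hP2sub h)
  · -- cardinality
    have hc1 : (P1.card : ℝ) ≤ 2 / ε := by
      rw [le_div_iff₀ hε]
      have : ε * D * P1.card + (D + (t vs - t vs) - f vs) ≤ 2 * D := hP1card
      have h0 : D + (t vs - t vs) - f vs = 0 := by rw [← hDdef]; ring
      rw [h0] at this
      nlinarith
    have hc2 : (P2.card : ℝ) ≤ 2 / ε := by
      rw [le_div_iff₀ hε]
      have : ε * D * P2.card + (D + ((-t vs) - (-t vs)) - f vs) ≤ 2 * D := hP2card
      have h0 : D + ((-t vs) - (-t vs)) - f vs = 0 := by rw [← hDdef]; ring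
      rw [h0] at this
      nlinarith
    have hcard : ((insert vs (P1 ∪ P2)).card : ℝ) ≤ (P1.card : ℝ) + P2.card + 1 := by
      have h1 := Finset.card_insert_le vs (P1 ∪ P2)
      have h2 := Finset.card_union_le P1 P2
      have : (insert vs (P1 ∪ P2)).card ≤ P1.card + P2.card + 1 := by omega
      exact_mod_cast this
    have h4 : 2 / ε + 2 / ε = 4 / ε := by ring
    have h5 : (0:ℝ) ≤ 4 / ε := by positivity
    linarith
  · -- coverage
    intro v hv
    have hvS : v ∈ S0 := (hmemS0 v).2 hv
    have hfv : 0 ≤ f v := le_trans hD.le (hfD v hvS)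
    rcases lt_trichotomy (t vs) (t v) with h | h | h
    · obtain ⟨q, hq, hcov⟩ := hP1cov v hvS h
      have hqmem : q ∈ insert vs (P1 ∪ P2) := by
        rcases Finset.mem_insert.1 hq with rfl | hq
        · exact Finset.mem_insert_self _ _
        · exact Finset.mem_insert_of_mem (Finset.mem_union_left _ hq)
      have hqS : q ∈ S0 := by
        rcases Finset.mem_insert.1 hq with rfl | hq
        · exact hvsS
        · exact hP1sub hq
      refine ⟨q, hqmem, ?_⟩
      rw [hpd q ((hmemS0 q).1 hqS) v hv, abs_sub_comm]
      exact hcov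
    · refine ⟨vs, Finset.mem_insert_self _ _, ?_⟩
      rw [hpd vs ((hmemS0 vs).1 hvsS) v hv, h]
      simp only [sub_self, abs_zero, add_zero]
      have h9 : 0 ≤ ε * f v := mul_nonneg hε.le hfv
      have := hfD v hvS
      show gdist G w u vs ≤ (1 + ε) * gdist G w u v
      have hDvs : gdist G w u vs = D := rfl
      show f vs ≤ (1 + ε) * f v
      rw [← hDdef]
      linarith
    · have h' : (-t vs) < (-t v) := by linarith
      obtain ⟨q, hq, hcov⟩ := hP2cov v hvS h'
      have hqmem : q ∈ insert vs (P1 ∪ P2) := by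
        rcases Finset.mem_insert.1 hq with rfl | hq
        · exact Finset.mem_insert_self _ _
        · exact Finset.mem_insert_of_mem (Finset.mem_union_right _ hq)
      have hqS : q ∈ S0 := by
        rcases Finset.mem_insert.1 hq with rfl | hq
        · exact hvsS
        · exact hP2sub hq
      refine ⟨q, hqmem, ?_⟩
      rw [hpd q ((hmemS0 q).1 hqS) v hv]
      have habs : |(-t v) - (-t q)| = |t q - t v| := by
        rw [show (-t v) - (-t q) = -(t v - t q) by ring, abs_neg, abs_sub_comm]
      rw [habs] at hcov
      exact hcov
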